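/- arXiv:1801.07837 — 2 statements merged into one kernel-verified Lean document; each statement's English description precedes it below -/
import Mathlib

section
/- For any N points z_1,…,z_N on S¹, the L² quadrant discrepancy satisfies ∫_{S¹} |(1/N)∑_{i=1}^N 𝟙_{Q(x)}(z_i) − 1/2|² dσ(x) = 1/4 − (1/π)·(1/N²)∑_{i,j=1}^N arccos|z_i·z_j|. -/
open RealInnerProductSpace MeasureTheory

/-- The normalized arc-length (uniform) probability measure on the unit circle
`S¹ ⊂ ℝ²`, as the pushforward of normalized Lebesgue measure on `[0, 2π)` under
`θ ↦ (cos θ, sin θ)`. -/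
noncomputable def circleUnif : Measure (EuclideanSpace ℝ (Fin 2)) :=
  Measure.map (fun θ : ℝ => (WithLp.toLp 2 ![Real.cos θ, Real.sin θ] : EuclideanSpace ℝ (Fin 2)))
    (ENNReal.ofReal (2 * Real.pi)⁻¹ • volume.restrict (Set.Ico 0 (2 * Real.pi)))

/-- The antipodal quadrants in the direction `x`. -/
def quad (x : EuclideanSpace ℝ (Fin 2)) : Set (EuclideanSpace ℝ (Fin 2)) :=
  {w | |⟪x, w⟫| > Real.sqrt 2 / 2}

open Real intervalIntegral Function Set


noncomputable def circ (θ : ℝ) : EuclideanSpace ℝ (Fin 2) := WithLp.toLp 2 ![Real.cos θ, Real.sin θ]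

lemma exists_angle (u : EuclideanSpace ℝ (Fin 2)) (hu : ‖u‖ = 1) : ∃ a, u = circ a := by
  have h : u 0 ^ 2 + u 1 ^ 2 = 1 := by
    have := hu
    rw [EuclideanSpace.norm_eq] at this
    have h2 : (∑ i, ‖u i‖ ^ 2) = 1 := by
      have h3 := congrArg (· ^ 2) this
      simp only [Real.sq_sqrt (by positivity : (0:ℝ) ≤ ∑ i, ‖u i‖ ^ 2)] at h3
      simpa using h3
    simpa [Fin.sum_univ_two, sq_abs, Real.norm_eq_abs] using h2
  set w : ℂ := ⟨u 0, u 1⟩ with hw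
  have hwne : w ≠ 0 := by
    intro h0
    rw [Complex.ext_iff] at h0
    simp [hw] at h0
    rw [h0.1, h0.2] at h
    norm_num at h
  have habs : ‖w‖ = 1 := by
    have : ‖w‖ = Real.sqrt (u 0 ^ 2 + u 1 ^ 2) := by
      rw [Complex.norm_def, Complex.normSq_apply]; norm_num [hw]; ring_nf
    rw [this, h, Real.sqrt_one]
  refine ⟨w.arg, ?_⟩
  have hc : Real.cos w.arg = u 0 := by
    rw [Complex.cos_arg hwne, habs]; simp [hw]
  have hs : Real.sin w.arg = u 1 := by
    rw [Complex.sin_arg, habs]; simp [hw]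
  ext i
  fin_cases i <;> simp [circ, hc, hs]

lemma inner_circ (θ a : ℝ) : (inner ℝ (circ θ) (circ a) : ℝ) = Real.cos (θ - a) := by
  simp only [circ, PiLp.toLp_apply, PiLp.inner_apply, RCLike.inner_apply, Fin.sum_univ_two, Real.cos_sub,
    Matrix.cons_val_zero, Matrix.cons_val_one, Matrix.head_cons, conj_trivial]
  ring

lemma abs_cos_gt_iff (t : ℝ) : |Real.cos t| > Real.sqrt 2 / 2 ↔ 0 < Real.cos (2 * t) := by
  rw [Real.cos_two_mul]
  have h2 : Real.sqrt 2 ^ 2 = 2 := Real.sq_sqrt (by norm_num)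
  have hs : (0:ℝ) ≤ Real.sqrt 2 := Real.sqrt_nonneg 2
  have hca : |Real.cos t| ^ 2 = Real.cos t ^ 2 := sq_abs _
  constructor
  · intro hlt
    nlinarith [abs_nonneg (Real.cos t)]
  · intro hlt
    nlinarith [abs_nonneg (Real.cos t)]


lemma circ_cont : Continuous circ := by
  have h : Continuous fun θ : ℝ => (fun i : Fin 2 => (![Real.cos θ, Real.sin θ] : Fin 2 → ℝ) i) := by
    apply continuous_pi
    intro i
    fin_cases i
    · simpa using Real.continuous_cos
    · simpa using Real.continuous_sin
  exact (PiLp.continuous_toLp _ _).comp h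


lemma cos_pos_iff' {ψ : ℝ} (h1 : -(π + π/2) ≤ ψ) (h2 : ψ ≤ π/2) :
    0 < Real.cos ψ ↔ (-(π/2) < ψ ∧ ψ < π/2) := by
  constructor
  · intro h
    constructor
    · by_contra hcon
      push_neg at hcon
      have hnp : Real.cos (-ψ) ≤ 0 :=
        Real.cos_nonpos_of_pi_div_two_le_of_le (by linarith) (by linarith)
      rw [Real.cos_neg] at hnp; linarith
    · by_contra hcon
      push_neg at hcon
      have hnp : Real.cos ψ ≤ 0 :=
        Real.cos_nonpos_of_pi_div_two_le_of_le (by linarith) (by linarith)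
      linarith
  · exact fun ⟨ha, hb⟩ => Real.cos_pos_of_mem_Ioo ⟨ha, hb⟩

lemma window_iff1 {δ φ : ℝ} (hδ0 : 0 ≤ δ) (hδ1 : δ ≤ π) (hφ1 : -(π/2) ≤ φ) (hφ2 : φ ≤ π/2) :
    (0 < Real.cos φ ∧ 0 < Real.cos (φ - δ)) ↔ φ ∈ Ioo (δ - π/2) (π/2) := by
  have hπ := Real.pi_pos
  rw [Set.mem_Ioo]
  constructor
  · rintro ⟨h1, h2⟩
    have hA := (cos_pos_iff' (by linarith) (by linarith)).1 h1
    refine ⟨?_, hA.2⟩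
    by_contra hcon
    push_neg at hcon
    have hnp : Real.cos (δ - φ) ≤ 0 :=
      Real.cos_nonpos_of_pi_div_two_le_of_le (by linarith) (by linarith)
    rw [← neg_sub, Real.cos_neg] at hnp; linarith
  · rintro ⟨ha, hb⟩
    exact ⟨Real.cos_pos_of_mem_Ioo (Set.mem_Ioo.mpr ⟨by linarith, hb⟩),
      Real.cos_pos_of_mem_Ioo (Set.mem_Ioo.mpr ⟨by linarith, by linarith⟩)⟩

lemma window_iff2 {δ φ : ℝ} (hδ0 : π < δ) (hδ1 : δ ≤ 2 * π) (hφ1 : -(π/2) ≤ φ) (hφ2 : φ ≤ π/2) :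
    (0 < Real.cos φ ∧ 0 < Real.cos (φ - δ)) ↔ φ ∈ Ioo (-(π/2)) (δ - 3 * π / 2) := by
  have hπ := Real.pi_pos
  rw [Set.mem_Ioo]
  constructor
  · rintro ⟨h1, h2⟩
    have hA := (cos_pos_iff' (by linarith) (by linarith)).1 h1
    refine ⟨hA.1, ?_⟩
    by_contra hcon
    push_neg at hcon
    have hnp : Real.cos (δ - φ) ≤ 0 :=
      Real.cos_nonpos_of_pi_div_two_le_of_le (by linarith) (by linarith)
    rw [← neg_sub, Real.cos_neg] at hnp; linarith
  · rintro ⟨ha, hb⟩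
    refine ⟨Real.cos_pos_of_mem_Ioo (Set.mem_Ioo.mpr ⟨ha, by linarith⟩), ?_⟩
    rw [← Real.cos_add_two_pi]
    exact Real.cos_pos_of_mem_Ioo (Set.mem_Ioo.mpr ⟨by linarith, by linarith⟩)

lemma window_integral {δ : ℝ} (hδ0 : 0 ≤ δ) (hδ1 : δ ≤ 2 * π) :
    ∫ φ in (-(π/2))..(π/2),
      (if 0 < Real.cos φ then (1:ℝ) else 0) * (if 0 < Real.cos (φ - δ) then 1 else 0)
      = |π - δ| := by
  have hπ := Real.pi_pos
  have hif : ∀ φ : ℝ, (if 0 < Real.cos φ then (1:ℝ) else 0) * (if 0 < Real.cos (φ - δ) then 1 else 0)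
      = if (0 < Real.cos φ ∧ 0 < Real.cos (φ - δ)) then (1:ℝ) else 0 := by
    intro φ
    by_cases h1 : 0 < Real.cos φ <;> by_cases h2 : 0 < Real.cos (φ - δ) <;> simp [h1, h2]
  rcases le_or_gt δ π with hcase | hcase
  · have hcongr : ∫ φ in (-(π/2))..(π/2),
        (if 0 < Real.cos φ then (1:ℝ) else 0) * (if 0 < Real.cos (φ - δ) then 1 else 0)
        = ∫ φ in (-(π/2))..(π/2), (Ioo (δ - π/2) (π/2)).indicator (fun _ => (1:ℝ)) φ := by
      apply intervalIntegral.integral_congr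
      intro φ hφ
      rw [Set.uIcc_of_le (by linarith)] at hφ
      show ((if 0 < Real.cos φ then (1:ℝ) else 0) * (if 0 < Real.cos (φ - δ) then 1 else 0)) = _
      rw [hif φ, Set.indicator_apply]
      by_cases hmem : φ ∈ Ioo (δ - π/2) (π/2)
      · rw [if_pos ((window_iff1 hδ0 hcase hφ.1 hφ.2).2 hmem), if_pos hmem]
      · rw [if_neg (fun h => hmem ((window_iff1 hδ0 hcase hφ.1 hφ.2).1 h)), if_neg hmem]
    rw [hcongr, intervalIntegral.integral_of_le (by linarith),
      MeasureTheory.setIntegral_indicator measurableSet_Ioo]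
    have hset : Ioc (-(π/2)) (π/2) ∩ Ioo (δ - π/2) (π/2) = Ioo (δ - π/2) (π/2) := by
      apply Set.inter_eq_right.mpr
      intro x hx
      exact ⟨by linarith [hx.1], le_of_lt hx.2⟩
    rw [hset, MeasureTheory.setIntegral_const, MeasureTheory.measureReal_def, Real.volume_Ioo, smul_eq_mul, mul_one,
      ENNReal.toReal_ofReal (by linarith), abs_of_nonneg (by linarith)]
    ring
  · have hcongr : ∫ φ in (-(π/2))..(π/2),
        (if 0 < Real.cos φ then (1:ℝ) else 0) * (if 0 < Real.cos (φ - δ) then 1 else 0)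
        = ∫ φ in (-(π/2))..(π/2), (Ioo (-(π/2)) (δ - 3 * π / 2)).indicator (fun _ => (1:ℝ)) φ := by
      apply intervalIntegral.integral_congr
      intro φ hφ
      rw [Set.uIcc_of_le (by linarith)] at hφ
      show ((if 0 < Real.cos φ then (1:ℝ) else 0) * (if 0 < Real.cos (φ - δ) then 1 else 0)) = _
      rw [hif φ, Set.indicator_apply]
      by_cases hmem : φ ∈ Ioo (-(π/2)) (δ - 3 * π / 2)
      · rw [if_pos ((window_iff2 hcase hδ1 hφ.1 hφ.2).2 hmem), if_pos hmem]
      · rw [if_neg (fun h => hmem ((window_iff2 hcase hδ1 hφ.1 hφ.2).1 h)), if_neg hmem]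
    rw [hcongr, intervalIntegral.integral_of_le (by linarith),
      MeasureTheory.setIntegral_indicator measurableSet_Ioo]
    have hset : Ioc (-(π/2)) (π/2) ∩ Ioo (-(π/2)) (δ - 3 * π / 2) = Ioo (-(π/2)) (δ - 3 * π / 2) := by
      apply Set.inter_eq_right.mpr
      intro x hx
      exact ⟨hx.1, by linarith [hx.2]⟩
    rw [hset, MeasureTheory.setIntegral_const, MeasureTheory.measureReal_def, Real.volume_Ioo, smul_eq_mul, mul_one,
      ENNReal.toReal_ofReal (by linarith), abs_of_nonpos (by linarith)]
    ring

lemma meas_ind {g : ℝ → ℝ} (hg : Continuous g) :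
    Measurable fun θ => if 0 < g θ then (1:ℝ) else 0 :=
  Measurable.ite (measurableSet_lt measurable_const hg.measurable)
    measurable_const measurable_const

lemma ii_bdd {f : ℝ → ℝ} (hf : Measurable f) (hb : ∀ x, ‖f x‖ ≤ 1) (a b : ℝ) :
    IntervalIntegrable f volume a b := by
  rw [intervalIntegrable_iff]
  haveI : IsFiniteMeasure (volume.restrict (Set.uIoc a b)) := by
    constructor
    rw [Measure.restrict_apply_univ, Set.uIoc, Real.volume_Ioc]
    exact ENNReal.ofReal_lt_top
  exact ⟨hf.aestronglyMeasurable, HasFiniteIntegral.of_bounded (C := 1) (ae_of_all _ hb)⟩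

lemma abs_cos_add_int_mul_pi (x : ℝ) (k : ℤ) : |Real.cos (x + k * π)| = |Real.cos x| := by
  have hs : Real.sin ((k : ℝ) * π) = 0 := Real.sin_int_mul_pi k
  have hsc := Real.sin_sq_add_cos_sq ((k : ℝ) * π)
  have hone : |Real.cos ((k : ℝ) * π)| = 1 := by
    have h2 : Real.cos ((k:ℝ) * π) * Real.cos ((k:ℝ) * π) = 1 := by nlinarith
    rcases mul_self_eq_one_iff.1 h2 with h | h <;> rw [h] <;> norm_num
  rw [Real.cos_add, hs, mul_zero, sub_zero, abs_mul, hone, mul_one]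

lemma pair_integral (a b : ℝ) :
    ∫ θ in (0:ℝ)..(2*π),
      (if 0 < Real.cos (2*θ - 2*a) then (1:ℝ) else 0) *
        (if 0 < Real.cos (2*θ - 2*b) then 1 else 0)
      = π - 2 * Real.arccos |Real.cos (a - b)| := by
  have hπ := Real.pi_pos
  set δ := toIcoMod Real.two_pi_pos 0 (2*b - 2*a) with hδdef
  have hδmem : δ ∈ Set.Ico (0:ℝ) (0 + 2*π) := toIcoMod_mem_Ico Real.two_pi_pos 0 (2*b - 2*a)
  rw [zero_add] at hδmem
  set k := toIcoDiv Real.two_pi_pos 0 (2*b - 2*a) with hkdef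
  have hk : (2*b - 2*a) - δ = k • (2*π) := self_sub_toIcoMod Real.two_pi_pos 0 (2*b - 2*a)
  rw [zsmul_eq_mul] at hk
  set g : ℝ → ℝ := fun x => (if 0 < Real.cos (x - 2*a) then (1:ℝ) else 0) *
    (if 0 < Real.cos (x - 2*b) then 1 else 0) with hgdef
  set h : ℝ → ℝ := fun ψ => (if 0 < Real.cos ψ then (1:ℝ) else 0) *
    (if 0 < Real.cos (ψ - δ) then 1 else 0) with hhdef
  have hgmeas : Measurable g :=
    (meas_ind (by continuity)).mul (meas_ind (by continuity))
  have hhmeas : Measurable h :=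
    (meas_ind (by continuity)).mul (meas_ind (by continuity))
  have hgbd : ∀ x, ‖g x‖ ≤ 1 := by
    intro x
    rw [hgdef]
    simp only [Real.norm_eq_abs]
    by_cases h1 : 0 < Real.cos (x - 2*a) <;> by_cases h2 : 0 < Real.cos (x - 2*b) <;>
      simp [h1, h2]
  have hhbd : ∀ x, ‖h x‖ ≤ 1 := by
    intro x
    rw [hhdef]
    simp only [Real.norm_eq_abs]
    by_cases h1 : 0 < Real.cos x <;> by_cases h2 : 0 < Real.cos (x - δ) <;> simp [h1, h2]
  have hgper : Periodic g (2*π) := by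
    intro x
    have hc : ∀ c : ℝ, Real.cos (x + 2*π - c) = Real.cos (x - c) := by
      intro c
      rw [show x + 2*π - c = (x - c) + 2*π by ring, Real.cos_add_two_pi]
    simp only [hgdef, hc]
  have hhper : Periodic h (2*π) := by
    intro x
    simp only [hhdef, Real.cos_add_two_pi,
      show x + 2*π - δ = (x - δ) + 2*π by ring]
  have hgh : ∀ x, g x = h (x - 2*a) := by
    intro x
    simp only [hgdef, hhdef]
    congr 2
    rw [show x - 2*a - δ = (x - 2*b) + (k : ℝ) * (2*π) by linarith,
      Real.cos_add_int_mul_two_pi]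
  -- step 1: reduce to ∫ g over [0, 4π] scaled
  have step1 : ∫ θ in (0:ℝ)..(2*π),
      (if 0 < Real.cos (2*θ - 2*a) then (1:ℝ) else 0) *
        (if 0 < Real.cos (2*θ - 2*b) then 1 else 0)
      = (2:ℝ)⁻¹ • ∫ x in (2*(0:ℝ))..(2*(2*π)), g x := by
    rw [← intervalIntegral.integral_comp_mul_left g (two_ne_zero)]
  have step2 : ∫ x in (2*(0:ℝ))..(2*(2*π)), g x = 2 * ∫ x in (0:ℝ)..(2*π), g x := by
    have hadj : (∫ x in (2*(0:ℝ))..(2*π), g x) + ∫ x in (2*π)..(2*(2*π)), g x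
        = ∫ x in (2*(0:ℝ))..(2*(2*π)), g x :=
      intervalIntegral.integral_add_adjacent_intervals
        (ii_bdd hgmeas hgbd _ _) (ii_bdd hgmeas hgbd _ _)
    have hsecond : ∫ x in (2*π)..(2*(2*π)), g x = ∫ x in (0:ℝ)..(2*π), g x := by
      have := hgper.intervalIntegral_add_eq (2*π) 0
      rw [zero_add] at this
      rw [show 2*(2*π) = 2*π + 2*π by ring]
      exact this
    rw [← hadj, hsecond, show 2*(0:ℝ) = 0 by ring]
    ring
  have step3 : ∫ x in (0:ℝ)..(2*π), g x = ∫ x in (-(π/2))..(-(π/2) + 2*π), h x := by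
    have h1 : ∫ x in (0:ℝ)..(2*π), g x = ∫ x in (0:ℝ)..(2*π), h (x - 2*a) := by
      apply intervalIntegral.integral_congr
      intro x _
      exact hgh x
    rw [h1, intervalIntegral.integral_comp_sub_right h (2*a)]
    have := hhper.intervalIntegral_add_eq (0 - 2*a) (-(π/2))
    rw [show 2*π - 2*a = (0 - 2*a) + 2*π by ring]
    exact this
  have step4 : ∫ x in (-(π/2))..(-(π/2) + 2*π), h x = (∫ x in (-(π/2))..(π/2), h x) := by
    have hadj : (∫ x in (-(π/2))..(π/2), h x) + ∫ x in (π/2)..(-(π/2) + 2*π), h x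
        = ∫ x in (-(π/2))..(-(π/2) + 2*π), h x :=
      intervalIntegral.integral_add_adjacent_intervals
        (ii_bdd hhmeas hhbd _ _) (ii_bdd hhmeas hhbd _ _)
    have hzero : ∫ x in (π/2)..(-(π/2) + 2*π), h x = 0 := by
      have : ∫ x in (π/2)..(-(π/2) + 2*π), h x = ∫ x in (π/2)..(-(π/2) + 2*π), (0:ℝ) := by
        apply intervalIntegral.integral_congr
        intro x hx
        rw [Set.uIcc_of_le (by linarith)] at hx
        have hnp : Real.cos x ≤ 0 :=
          Real.cos_nonpos_of_pi_div_two_le_of_le hx.1 (by linarith [hx.2])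
        simp only [hhdef, if_neg (not_lt.mpr hnp), zero_mul]
      rw [this, intervalIntegral.integral_zero]
    rw [← hadj, hzero, add_zero]
  have hwin : ∫ x in (-(π/2))..(π/2), h x = |π - δ| := by
    simp only [hhdef]
    exact window_integral hδmem.1 (le_of_lt hδmem.2)
  have hcosab : |Real.cos (a - b)| = |Real.cos (δ/2)| := by
    have he : a - b = -(δ/2 + (k : ℝ) * π) := by linarith
    rw [he, Real.cos_neg, abs_cos_add_int_mul_pi]
  have harc : 2 * Real.arccos |Real.cos (δ/2)| = π - |π - δ| := by
    rcases le_or_gt δ π with hc | hc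
    · rw [abs_of_nonneg (Real.cos_nonneg_of_mem_Icc
        (Set.mem_Icc.mpr ⟨by linarith [hδmem.1], by linarith⟩)),
        Real.arccos_cos (by linarith [hδmem.1]) (by linarith),
        abs_of_nonneg (by linarith)]
      ring
    · have h1 : |Real.cos (δ/2)| = Real.cos (π - δ/2) := by
        rw [abs_of_nonpos (Real.cos_nonpos_of_pi_div_two_le_of_le (by linarith)
          (by linarith [hδmem.2])), Real.cos_pi_sub]
      rw [h1, Real.arccos_cos (by linarith [hδmem.2]) (by linarith),
        abs_of_nonpos (by linarith)]
      ring
  rw [step1, step2, step3, step4, hwin, hcosab, harc, smul_eq_mul]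
  ring

set_option maxHeartbeats 2000000 in
theorem stmt_12 (N : ℕ) (hN : 0 < N) (z : Fin N → EuclideanSpace ℝ (Fin 2))
    (hz : ∀ i, ‖z i‖ = 1) :
    ∫ x, ((1 / (N : ℝ)) * ∑ i, (quad x).indicator (fun _ => (1 : ℝ)) (z i) - 1 / 2) ^ 2 ∂circleUnif =
      1 / 4 - (1 / Real.pi) * ((1 / (N : ℝ) ^ 2) * ∑ i, ∑ j, Real.arccos |⟪z i, z j⟫|) := by
  classical
  have hπ := Real.pi_pos
  choose a ha using fun i => exists_angle (z i) (hz i)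
  set e : Fin N → ℝ → ℝ := fun i θ => if 0 < Real.cos (2*θ - 2*(a i)) then (1:ℝ) else 0
    with hedef
  have hFmeas : Measurable fun x : EuclideanSpace ℝ (Fin 2) =>
      ((1 / (N : ℝ)) * ∑ i, (quad x).indicator (fun _ => (1 : ℝ)) (z i) - 1 / 2) ^ 2 := by
    apply Measurable.pow_const
    apply Measurable.sub _ measurable_const
    apply Measurable.const_mul
    apply Finset.measurable_sum
    intro i _
    have hrw : (fun x : EuclideanSpace ℝ (Fin 2) => (quad x).indicator (fun _ => (1:ℝ)) (z i))
        = fun x => if Real.sqrt 2 / 2 < |(⟪x, z i⟫ : ℝ)| then 1 else 0 := by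
      funext x; rw [Set.indicator_apply]; rfl
    rw [hrw]
    exact Measurable.ite (measurableSet_lt measurable_const
      ((Continuous.inner continuous_id continuous_const).abs.measurable))
      measurable_const measurable_const
  have hind : ∀ (θ : ℝ) (i : Fin N),
      (quad (WithLp.toLp 2 ![Real.cos θ, Real.sin θ] : EuclideanSpace ℝ (Fin 2))).indicator
        (fun _ => (1:ℝ)) (z i) = e i θ := by
    intro θ i
    rw [Set.indicator_apply]
    have hmem : (z i ∈ quad (WithLp.toLp 2 ![Real.cos θ, Real.sin θ] : EuclideanSpace ℝ (Fin 2)))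
        ↔ (0 < Real.cos (2*θ - 2*(a i))) := by
      show (|(inner ℝ (circ θ) (z i) : ℝ)| > Real.sqrt 2 / 2) ↔ _
      rw [ha i, inner_circ, abs_cos_gt_iff, show 2*(θ - a i) = 2*θ - 2*(a i) by ring]
    simp only [hedef]
    by_cases hm : z i ∈ quad (WithLp.toLp 2 ![Real.cos θ, Real.sin θ] : EuclideanSpace ℝ (Fin 2))
    · rw [if_pos hm, if_pos (hmem.1 hm)]
    · rw [if_neg hm, if_neg (fun hlt => hm (hmem.2 hlt))]
  rw [circleUnif]
  rw [MeasureTheory.integral_map (by exact circ_cont.measurable.aemeasurable)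
    hFmeas.aestronglyMeasurable]
  rw [MeasureTheory.integral_smul_measure, ENNReal.toReal_ofReal (by positivity), smul_eq_mul]
  have hbody : (fun θ : ℝ =>
      ((1 / (N : ℝ)) * ∑ i, (quad (WithLp.toLp 2 ![Real.cos θ, Real.sin θ] : EuclideanSpace ℝ (Fin 2))).indicator
        (fun _ => (1 : ℝ)) (z i) - 1 / 2) ^ 2)
      = fun θ : ℝ => ((1 / (N : ℝ)) * ∑ i, e i θ - 1/2)^2 := by
    funext θ
    rw [Finset.sum_congr rfl fun i _ => hind θ i]
  have hset : ∫ θ in Set.Ico 0 (2*π),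
      ((1 / (N : ℝ)) * ∑ i, (quad (WithLp.toLp 2 ![Real.cos θ, Real.sin θ] : EuclideanSpace ℝ (Fin 2))).indicator
        (fun _ => (1 : ℝ)) (z i) - 1 / 2) ^ 2
      = ∫ θ in (0:ℝ)..(2*π), ((1 / (N : ℝ)) * ∑ i, e i θ - 1/2)^2 := by
    rw [intervalIntegral.integral_of_le (by linarith)]
    rw [MeasureTheory.setIntegral_congr_set MeasureTheory.Ico_ae_eq_Ioc.symm]
    simp only [hbody]
  rw [hset]
  -- expand the square
  have hexp : ∀ θ : ℝ, ((1/(N:ℝ)) * ∑ i, e i θ - 1/2)^2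
      = (1/(N:ℝ))^2 * (∑ i, ∑ j, e i θ * e j θ)
        - (1/(N:ℝ)) * (∑ i, e i θ * e i θ) + 1/4 := by
    intro θ
    have hsq : ∀ i, e i θ * e i θ = e i θ := by
      intro i; simp only [hedef]
      by_cases hc : 0 < Real.cos (2*θ - 2*(a i)) <;> simp [hc]
    have hS2 : (∑ i, e i θ)^2 = ∑ i, ∑ j, e i θ * e j θ := by
      rw [sq, Finset.sum_mul_sum]
    have hS1 : (∑ i, e i θ * e i θ) = ∑ i, e i θ :=
      Finset.sum_congr rfl fun i _ => hsq i
    rw [hS1, ← hS2]; ring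
  have hiie : ∀ (i j : Fin N),
      IntervalIntegrable (fun θ => e i θ * e j θ) volume 0 (2*π) := by
    intro i j
    apply ii_bdd ((meas_ind (Real.continuous_cos.comp ((continuous_const.mul continuous_id).sub
      continuous_const))).mul (meas_ind (Real.continuous_cos.comp
      ((continuous_const.mul continuous_id).sub continuous_const))))
    intro x
    simp only [hedef, Real.norm_eq_abs]
    by_cases h1 : 0 < Real.cos (2*x - 2*(a i)) <;>
      by_cases h2 : 0 < Real.cos (2*x - 2*(a j)) <;> simp [h1, h2]
  have hA : IntervalIntegrable (fun θ => ∑ i, ∑ j, e i θ * e j θ) volume 0 (2*π) := by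
    have hfe : (fun θ => ∑ i : Fin N, ∑ j : Fin N, e i θ * e j θ)
        = ∑ i : Fin N, ∑ j : Fin N, (fun θ => e i θ * e j θ) := by
      funext θ; simp [Finset.sum_apply]
    rw [hfe]
    exact IntervalIntegrable.sum _ fun i _ => IntervalIntegrable.sum _ fun j _ => hiie i j
  have hB : IntervalIntegrable (fun θ => ∑ i, e i θ * e i θ) volume 0 (2*π) := by
    have hfe : (fun θ => ∑ i : Fin N, e i θ * e i θ)
        = ∑ i : Fin N, (fun θ => e i θ * e i θ) := by
      funext θ; simp [Finset.sum_apply]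
    rw [hfe]
    exact IntervalIntegrable.sum _ fun i _ => hiie i i
  have hsplit : ∫ θ in (0:ℝ)..(2*π), ((1/(N:ℝ)) * ∑ i, e i θ - 1/2)^2
      = (1/(N:ℝ))^2 * (∑ i, ∑ j, ∫ θ in (0:ℝ)..(2*π), e i θ * e j θ)
        - (1/(N:ℝ)) * (∑ i, ∫ θ in (0:ℝ)..(2*π), e i θ * e i θ) + (2*π - 0) * (1/4) := by
    have h1 : (fun θ : ℝ => ((1/(N:ℝ)) * ∑ i, e i θ - 1/2)^2)
        = fun θ => (1/(N:ℝ))^2 * (∑ i, ∑ j, e i θ * e j θ)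
          - (1/(N:ℝ)) * (∑ i, e i θ * e i θ) + 1/4 := funext hexp
    rw [h1]
    rw [intervalIntegral.integral_add ((hA.const_mul _).sub (hB.const_mul _))
      intervalIntegrable_const]
    rw [intervalIntegral.integral_sub (hA.const_mul _) (hB.const_mul _)]
    rw [intervalIntegral.integral_const_mul, intervalIntegral.integral_const_mul,
      intervalIntegral.integral_const, smul_eq_mul]
    have hAin : ∀ i : Fin N,
        IntervalIntegrable (fun θ => ∑ j : Fin N, e i θ * e j θ) volume 0 (2*π) := by
      intro i
      have hfe : (fun θ => ∑ j : Fin N, e i θ * e j θ)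
          = ∑ j : Fin N, (fun θ => e i θ * e j θ) := by
        funext θ; simp [Finset.sum_apply]
      rw [hfe]
      exact IntervalIntegrable.sum _ fun j _ => hiie i j
    congr 2
    · congr 1
      rw [intervalIntegral.integral_finset_sum (fun i _ => hAin i)]
      exact Finset.sum_congr rfl fun i _ =>
        intervalIntegral.integral_finset_sum fun j _ => hiie i j
    · congr 1
      exact intervalIntegral.integral_finset_sum fun i _ => hiie i i
  rw [hsplit]
  have hpairval : ∀ i j : Fin N, ∫ θ in (0:ℝ)..(2*π), e i θ * e j θ
      = π - 2 * Real.arccos |Real.cos (a i - a j)| := by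
    intro i j
    simp only [hedef]
    exact pair_integral (a i) (a j)
  have hip : ∀ i j : Fin N, (⟪z i, z j⟫ : ℝ) = Real.cos (a i - a j) := by
    intro i j
    rw [ha i, ha j]
    exact inner_circ (a i) (a j)
  have hdiag : (∑ i : Fin N, ∫ θ in (0:ℝ)..(2*π), e i θ * e i θ) = N * π := by
    rw [Finset.sum_congr rfl fun i _ => hpairval i i]
    simp [Real.arccos_one, Finset.sum_const, Finset.card_univ, nsmul_eq_mul]
  have hoffdiag : (∑ i : Fin N, ∑ j : Fin N, ∫ θ in (0:ℝ)..(2*π), e i θ * e j θ)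
      = (N:ℝ)^2 * π - 2 * ∑ i, ∑ j, Real.arccos |Real.cos (a i - a j)| := by
    rw [Finset.sum_congr rfl fun i _ => Finset.sum_congr rfl fun j _ => hpairval i j]
    rw [Finset.sum_congr rfl fun i (_ : i ∈ Finset.univ) => Finset.sum_sub_distrib _ _,
      Finset.sum_sub_distrib]
    simp only [Finset.sum_const, Finset.card_univ, Fintype.card_fin, nsmul_eq_mul,
      ← Finset.mul_sum]
    ring
  rw [hdiag, hoffdiag]
  have htarget : (∑ i : Fin N, ∑ j : Fin N, Real.arccos |(⟪z i, z j⟫ : ℝ)|)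
      = ∑ i, ∑ j, Real.arccos |Real.cos (a i - a j)| := by
    exact Finset.sum_congr rfl fun i _ => Finset.sum_congr rfl fun j _ => by rw [hip i j]
  rw [htarget]
  have hNne : (N:ℝ) ≠ 0 := Nat.cast_ne_zero.mpr hN.ne'
  have hπne : π ≠ 0 := hπ.ne'
  field_simp
  ring
end

section
/- For any Borel probability measure μ on S¹, ∫_{S¹} |μ(Q(x)) − 1/2|² dσ(x) = 1/4 − (1/π)·∬_{S¹×S¹} arccos|y·z| dμ(y)dμ(z). -/
open RealInnerProductSpace MeasureTheory

open Real Set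
open scoped ENNReal

noncomputable def cpt (θ : ℝ) : EuclideanSpace ℝ (Fin 2) := WithLp.toLp 2 ![Real.cos θ, Real.sin θ]

lemma cpt_cont : Continuous cpt := by
  have : Continuous (fun θ : ℝ => (![Real.cos θ, Real.sin θ] : Fin 2 → ℝ)) := by
    apply continuous_pi; intro i; fin_cases i <;> simp <;> fun_prop
  exact (EuclideanSpace.equiv (Fin 2) ℝ).symm.continuous.comp this

lemma inner_cpt (y : EuclideanSpace ℝ (Fin 2)) (θ : ℝ) :
    ⟪y, cpt θ⟫ = y 0 * Real.cos θ + y 1 * Real.sin θ := by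
  simp [cpt, PiLp.inner_apply, Fin.sum_univ_two]
  ring

lemma exists_angle_s13 (y : EuclideanSpace ℝ (Fin 2)) (hy : ‖y‖ = 1) :
    ∃ α, y = cpt α := by
  have h2 : (y 0)^2 + (y 1)^2 = 1 := by
    have h := congrArg (·^2) hy
    rw [EuclideanSpace.norm_eq] at h
    simp only [one_pow] at h
    rw [Real.sq_sqrt (by positivity)] at h
    simpa [Fin.sum_univ_two, sq_abs] using h
  set z : ℂ := ⟨y 0, y 1⟩ with hz
  have hza : ‖z‖ = 1 := by
    rw [Complex.norm_def, Complex.normSq_mk]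
    rw [show y 0 * y 0 + y 1 * y 1 = 1 by nlinarith]
    exact Real.sqrt_one
  refine ⟨Complex.arg z, ?_⟩
  have hzne : z ≠ 0 := by
    intro h; rw [h] at hza; simp at hza
  have hc := Complex.cos_arg hzne
  have hs := Complex.sin_arg z
  rw [hza] at hc hs
  simp only [div_one] at hc hs
  ext i
  fin_cases i
  · show y 0 = cpt z.arg 0
    simp [cpt]
    rw [hc, hz]
  · show y 1 = cpt z.arg 1
    simp [cpt]
    rw [hs, hz]

noncomputable abbrev cc : ℝ := Real.sqrt 2 / 2

lemma cos_pi_div_four' : Real.cos (π/4) = cc := Real.cos_pi_div_four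

lemma cos_gt_of (v : ℝ) (h : |v| < π/4) : cc < Real.cos v := by
  have h1 : Real.cos (π/4) < Real.cos |v| := by
    rcases eq_or_lt_of_le (abs_nonneg v) with h0 | h0
    · rw [← h0, Real.cos_zero, Real.cos_pi_div_four]
      nlinarith [Real.sq_sqrt (by norm_num : (0:ℝ) ≤ 2), Real.sqrt_nonneg 2]
    · exact Real.cos_lt_cos_of_nonneg_of_le_pi (abs_nonneg v) (by linarith [Real.pi_pos]) h
  rwa [Real.cos_abs, cos_pi_div_four'] at h1

lemma abs_cos_le_of (v : ℝ) (h1 : π/4 ≤ |v|) (h2 : |v| ≤ 3*π/4) : |Real.cos v| ≤ cc := by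
  rw [← Real.cos_abs v, abs_le]
  constructor
  · have : Real.cos (3*π/4) ≤ Real.cos |v| :=
      Real.cos_le_cos_of_nonneg_of_le_pi (abs_nonneg v) (by linarith [Real.pi_pos]) h2
    have h34 : Real.cos (3*π/4) = -cc := by
      rw [show (3*π/4 : ℝ) = π - π/4 by ring, Real.cos_pi_sub, cos_pi_div_four']
    linarith
  · have : Real.cos |v| ≤ Real.cos (π/4) :=
      Real.cos_le_cos_of_nonneg_of_le_pi (by positivity) (by linarith [Real.pi_pos]) h1
    rwa [cos_pi_div_four'] at this

/-- characterization of |cos| > √2/2 on the window [-3π/4, 9π/4) -/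
lemma char_abs_cos {u : ℝ} (hu : u ∈ Ico (-(3*π/4)) (9*π/4)) :
    cc < |Real.cos u| ↔
      u ∈ Ioo (-(π/4)) (π/4) ∪ Ioo (3*π/4) (5*π/4) ∪ Ioo (7*π/4) (9*π/4) := by
  obtain ⟨hu1, hu2⟩ := hu
  constructor
  · intro h
    by_contra hn
    simp only [mem_union, mem_Ioo, not_or, not_and_or, not_lt] at hn
    obtain ⟨⟨c1, c2⟩, c3⟩ := hn
    -- cases on u
    rcases le_or_gt u (π/4) with h1 | h1
    · -- u ∈ [-3π/4, -π/4] ∪ {π/4} roughly: π/4 ≤ |u| ≤ 3π/4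
      have : π/4 ≤ |u| ∧ |u| ≤ 3*π/4 := by
        rcases c1 with c | c
        · rcases abs_cases u with ⟨e1,e2⟩|⟨e1,e2⟩ <;> constructor <;> linarith
        · rcases abs_cases u with ⟨e1,e2⟩|⟨e1,e2⟩ <;> constructor <;> linarith
      exact absurd h (not_lt.2 (abs_cos_le_of u this.1 this.2))
    · rcases le_or_gt u (5*π/4) with h2 | h2
      · -- u ∈ (π/4, 3π/4] ∪ [5π/4,5π/4]: use v = u - π? handle: π/4 ≤ |u - π| ≤ 3π/4
        have hv : π/4 ≤ |u - π| ∧ |u - π| ≤ 3*π/4 := by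
          rcases c2 with c | c <;> rcases abs_cases (u - π) with ⟨e1,e2⟩|⟨e1,e2⟩ <;>
            constructor <;> linarith [Real.pi_pos]
        have : |Real.cos (u - π)| ≤ cc := abs_cos_le_of _ hv.1 hv.2
        rw [show u - π = -(π - u) by ring, Real.cos_neg, Real.cos_pi_sub, abs_neg] at this
        exact absurd h (not_lt.2 this)
      · -- u ∈ (5π/4, 9π/4), not in (7π/4, 9π/4): u ∈ (5π/4, 7π/4]: v = u - 2π ∈ (-3π/4, -π/4]
        have hv : π/4 ≤ |u - 2*π| ∧ |u - 2*π| ≤ 3*π/4 := by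
          rcases c3 with c | c <;> rcases abs_cases (u - 2*π) with ⟨e1,e2⟩|⟨e1,e2⟩ <;>
            constructor <;> linarith [Real.pi_pos]
        have : |Real.cos (u - 2*π)| ≤ cc := abs_cos_le_of _ hv.1 hv.2
        rw [Real.cos_sub_two_pi] at this
        exact absurd h (not_lt.2 this)
  · intro h
    rcases h with (h | h) | h
    · have := cos_gt_of u (abs_lt.2 ⟨by linarith [h.1], h.2⟩)
      exact lt_of_lt_of_le this (le_abs_self _)
    · have := cos_gt_of (u - π) (abs_lt.2 ⟨by linarith [h.1], by linarith [h.2]⟩)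
      rw [show u - π = -(π - u) by ring, Real.cos_neg, Real.cos_pi_sub] at this
      calc cc < -Real.cos u := this
        _ ≤ |Real.cos u| := neg_le_abs _
    · have := cos_gt_of (u - 2*π) (abs_lt.2 ⟨by linarith [h.1], by linarith [h.2]⟩)
      rw [Real.cos_sub_two_pi] at this
      exact lt_of_lt_of_le this (le_abs_self _)

lemma core_set_eq {t : ℝ} (ht : |t| ≤ π/2) :
    {θ ∈ Ico (-(π/4)) (7*π/4) | cc < |Real.cos θ| ∧ cc < |Real.cos (θ - t)|} =
      Ioo (max (-(π/4)) (t - π/4)) (min (π/4) (t + π/4)) ∪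
      Ioo (max (3*π/4) (t + 3*π/4)) (min (5*π/4) (t + 5*π/4)) := by
  have hpi := Real.pi_pos
  obtain ⟨ht1, ht2⟩ := abs_le.1 ht
  ext θ
  simp only [mem_setOf_eq, mem_Ico, mem_union, mem_Ioo, lt_min_iff, max_lt_iff]
  constructor
  · rintro ⟨⟨hw1, hw2⟩, h1, h2⟩
    have c1 := (char_abs_cos (u := θ) ⟨by linarith, by linarith⟩).1 h1
    have c2 := (char_abs_cos (u := θ - t) ⟨by linarith, by linarith⟩).1 h2
    simp only [mem_union, mem_Ioo] at c1 c2
    rcases c1 with (d1 | d1) | d1 <;> rcases c2 with (d2 | d2) | d2 <;>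
      [skip; skip; skip; skip; skip; skip; skip; skip; skip] <;>
      first
        | (left; refine ⟨⟨?_, ?_⟩, ?_, ?_⟩ <;> linarith [d1.1, d1.2, d2.1, d2.2])
        | (right; refine ⟨⟨?_, ?_⟩, ?_, ?_⟩ <;> linarith [d1.1, d1.2, d2.1, d2.2])
        | (exfalso; linarith [d1.1, d1.2, d2.1, d2.2])
  · intro h
    have hθw : -(π/4) ≤ θ ∧ θ < 7*π/4 := by
      rcases h with ⟨⟨e1,e2⟩,e3,e4⟩ | ⟨⟨e1,e2⟩,e3,e4⟩ <;> constructor <;> linarith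
    refine ⟨⟨hθw.1, hθw.2⟩, ?_, ?_⟩
    · rw [char_abs_cos ⟨by linarith [hθw.1], by linarith [hθw.2]⟩]
      rcases h with ⟨⟨e1,e2⟩,e3,e4⟩ | ⟨⟨e1,e2⟩,e3,e4⟩
      · exact Or.inl (Or.inl ⟨e1, e3⟩)
      · exact Or.inl (Or.inr ⟨e1, e3⟩)
    · rw [char_abs_cos (u := θ - t) ⟨by linarith [hθw.1], by linarith [hθw.2]⟩]
      rcases h with ⟨⟨e1,e2⟩,e3,e4⟩ | ⟨⟨e1,e2⟩,e3,e4⟩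
      · exact Or.inl (Or.inl ⟨by linarith, by linarith⟩)
      · exact Or.inl (Or.inr ⟨by linarith, by linarith⟩)

lemma core_volume {t : ℝ} (ht : |t| ≤ π/2) :
    volume {θ ∈ Ico (-(π/4)) (7*π/4) | cc < |Real.cos θ| ∧ cc < |Real.cos (θ - t)|} =
      ENNReal.ofReal (π - 2 * |t|) := by
  have hpi := Real.pi_pos
  obtain ⟨ht1, ht2⟩ := abs_le.1 ht
  rw [core_set_eq ht]
  have hd : Disjoint (Ioo (max (-(π/4)) (t - π/4)) (min (π/4) (t + π/4)))
      (Ioo (max (3*π/4) (t + 3*π/4)) (min (5*π/4) (t + 5*π/4))) := by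
    apply Set.disjoint_left.2
    rintro x ⟨_, hx2⟩ ⟨hx3, _⟩
    have := lt_min_iff.1 hx2
    have := max_lt_iff.1 hx3
    linarith [this.1, (lt_min_iff.1 hx2).1]
  rw [measure_union hd measurableSet_Ioo, Real.volume_Ioo, Real.volume_Ioo]
  have e1 : min (π/4) (t + π/4) - max (-(π/4)) (t - π/4) = π/2 - |t| := by
    rcases abs_cases t with ⟨e, h0⟩ | ⟨e, h0⟩
    · rw [min_eq_left (by linarith), max_eq_right (by linarith)]; linarith
    · rw [min_eq_right (by linarith), max_eq_left (by linarith)]; linarith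
  have e2 : min (5*π/4) (t + 5*π/4) - max (3*π/4) (t + 3*π/4) = π/2 - |t| := by
    rcases abs_cases t with ⟨e, h0⟩ | ⟨e, h0⟩
    · rw [min_eq_left (by linarith), max_eq_right (by linarith)]; linarith
    · rw [min_eq_right (by linarith), max_eq_left (by linarith)]; linarith
  rw [e1, e2, ← ENNReal.ofReal_add (by linarith) (by linarith)]
  ring_nf

lemma abs_neg_one_zpow' (k : ℤ) : |(-1 : ℝ)^k| = 1 := by
  rcases Int.even_or_odd k with h | h
  · rw [h.neg_one_zpow, abs_one]
  · rw [h.neg_one_zpow, abs_neg, abs_one]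

lemma abs_cos_sub_int_mul_pi (x : ℝ) (k : ℤ) : |Real.cos (x - k * π)| = |Real.cos x| := by
  have h := Real.cos_add_int_mul_pi (x - k * π) k
  rw [sub_add_cancel] at h
  rw [h, abs_mul, abs_neg_one_zpow', one_mul]

lemma exists_reduce (t : ℝ) : ∃ k : ℤ, |t - k * π| ≤ π/2 := by
  refine ⟨round (t / π), ?_⟩
  have h := abs_sub_round (t / π)
  have hpi := Real.pi_pos
  have e : t - round (t/π) * π = (t/π - round (t/π)) * π := by field_simp
  rw [e, abs_mul, abs_of_pos hpi]
  nlinarith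

lemma core_volume' (t : ℝ) :
    volume {θ ∈ Ico (-(π/4)) (7*π/4) | cc < |Real.cos θ| ∧ cc < |Real.cos (θ - t)|} =
      ENNReal.ofReal (π - 2 * Real.arccos |Real.cos t|) := by
  obtain ⟨k, hk⟩ := exists_reduce t
  set t₀ := t - k * π with ht₀
  have hk1 := (abs_le.1 hk).1
  have hk2 := (abs_le.1 hk).2
  have hpi := Real.pi_pos
  have hset : ∀ θ : ℝ, |Real.cos (θ - t)| = |Real.cos (θ - t₀)| := by
    intro θ
    rw [show θ - t₀ = (θ - t) + k * π by rw [ht₀]; ring,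
      Real.cos_add_int_mul_pi, abs_mul, abs_neg_one_zpow', one_mul]
  have hcos : 0 ≤ Real.cos t₀ := Real.cos_nonneg_of_mem_Icc ⟨by linarith, by linarith⟩
  have h1 : |Real.cos t| = Real.cos |t₀| := by
    rw [Real.cos_abs, ← abs_of_nonneg hcos]
    exact (abs_cos_sub_int_mul_pi t k).symm
  have harccos : Real.arccos |Real.cos t| = |t₀| := by
    rw [h1, Real.arccos_cos (abs_nonneg _) (by linarith)]
  rw [harccos]
  have hss : {θ ∈ Ico (-(π/4)) (7*π/4) | cc < |Real.cos θ| ∧ cc < |Real.cos (θ - t)|} =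
      {θ ∈ Ico (-(π/4)) (7*π/4) | cc < |Real.cos θ| ∧ cc < |Real.cos (θ - t₀)|} := by
    ext θ; simp only [mem_setOf_eq, hset θ]
  rw [hss, core_volume hk]

lemma vol_inter_Ico_eq_Ioc (A : Set ℝ) (a b : ℝ) :
    volume (A ∩ Ico a b) = volume (A ∩ Ioc a b) := by
  apply le_antisymm
  · calc volume (A ∩ Ico a b) ≤ volume ((A ∩ Ioc a b) ∪ {a}) := by
          apply measure_mono
          rintro x ⟨hx1, hx2, hx3⟩
          rcases eq_or_lt_of_le hx2 with h | h
          · exact Or.inr (by simp [← h])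
          · exact Or.inl ⟨hx1, h, hx3.le⟩
      _ ≤ volume (A ∩ Ioc a b) + volume ({a} : Set ℝ) := measure_union_le _ _
      _ = volume (A ∩ Ioc a b) := by rw [Real.volume_singleton, add_zero]
  · calc volume (A ∩ Ioc a b) ≤ volume ((A ∩ Ico a b) ∪ {b}) := by
          apply measure_mono
          rintro x ⟨hx1, hx2, hx3⟩
          rcases eq_or_lt_of_le hx3 with h | h
          · exact Or.inr (by simp [h])
          · exact Or.inl ⟨hx1, hx2.le, h⟩
      _ ≤ volume (A ∩ Ico a b) + volume ({b} : Set ℝ) := measure_union_le _ _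
      _ = volume (A ∩ Ico a b) := by rw [Real.volume_singleton, add_zero]

lemma window_shift {A : Set ℝ} (hA : MeasurableSet A)
    (hper : ∀ (k : ℤ) (θ : ℝ), θ + k * (2*π) ∈ A ↔ θ ∈ A) (a b : ℝ) :
    volume (A ∩ Ico a (a + 2*π)) = volume (A ∩ Ico b (b + 2*π)) := by
  rw [vol_inter_Ico_eq_Ioc, vol_inter_Ico_eq_Ioc]
  refine MeasureTheory.IsAddFundamentalDomain.measure_set_eq
    (isAddFundamentalDomain_Ioc Real.two_pi_pos a)
    (isAddFundamentalDomain_Ioc Real.two_pi_pos b) hA ?_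
  rintro ⟨g, hg⟩
  obtain ⟨k, hk⟩ := (AddSubgroup.mem_zmultiples_iff).1 hg
  ext x
  simp only [mem_preimage]
  have h1 : (⟨g, hg⟩ : AddSubgroup.zmultiples (2*π)) +ᵥ x = g + x := rfl
  rw [h1, ← hk, zsmul_eq_mul, show (k:ℝ) * (2*π) + x = x + k*(2*π) by ring]
  exact hper k x

lemma key1D (α β : ℝ) :
    volume {θ ∈ Ico 0 (2*π) | cc < |Real.cos (θ - α)| ∧ cc < |Real.cos (θ - β)|}
      = ENNReal.ofReal (π - 2 * Real.arccos |Real.cos (α - β)|) := by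
  have hpi := Real.pi_pos
  set t := β - α with htdef
  set A : Set ℝ := {θ : ℝ | cc < |Real.cos θ| ∧ cc < |Real.cos (θ - t)|} with hA
  have hAmeas : MeasurableSet A := by
    apply MeasurableSet.inter
    · exact measurableSet_lt measurable_const (Real.continuous_cos.abs.measurable)
    · exact measurableSet_lt measurable_const
        ((Real.continuous_cos.comp (continuous_id.sub continuous_const)).abs.measurable)
  have hper : ∀ (k : ℤ) (θ : ℝ), θ + k * (2*π) ∈ A ↔ θ ∈ A := by
    intro k θ
    simp only [hA, mem_setOf_eq, Real.cos_add_int_mul_two_pi,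
      show θ + k * (2*π) - t = (θ - t) + k * (2*π) by ring]
  have step1 : {θ ∈ Ico 0 (2*π) | cc < |Real.cos (θ - α)| ∧ cc < |Real.cos (θ - β)|}
      = (fun θ => θ - α) ⁻¹' (A ∩ Ico (-α) (-α + 2*π)) := by
    ext θ
    simp only [mem_setOf_eq, mem_preimage, mem_inter_iff, mem_Ico, hA,
      show θ - α - t = θ - β by rw [htdef]; ring]
    constructor
    · rintro ⟨⟨h1, h2⟩, h3, h4⟩; exact ⟨⟨h3, h4⟩, by linarith, by linarith⟩
    · rintro ⟨⟨h3, h4⟩, h1, h2⟩; exact ⟨⟨by linarith, by linarith⟩, h3, h4⟩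
  rw [step1,
    (measurePreserving_sub_right volume α).measure_preimage
      ((hAmeas.inter measurableSet_Ico).nullMeasurableSet),
    window_shift hAmeas hper (-α) (-(π/4)),
    show Real.arccos |Real.cos (α - β)| = Real.arccos |Real.cos t| by
      rw [show α - β = -t by rw [htdef]; ring, Real.cos_neg],
    ← core_volume' t]
  congr 1
  ext θ
  simp only [mem_inter_iff, mem_Ico, mem_setOf_eq, hA]
  constructor
  · rintro ⟨⟨h1, h2⟩, h3, h4⟩; exact ⟨⟨h3, by linarith⟩, h1, h2⟩
  · rintro ⟨⟨h3, h4⟩, h1, h2⟩; exact ⟨⟨h1, h2⟩, h3, by linarith⟩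

lemma circleUnif_eq : circleUnif =
    Measure.map cpt (ENNReal.ofReal (2 * π)⁻¹ • volume.restrict (Set.Ico 0 (2 * π))) := rfl

lemma quad_isOpen (x : EuclideanSpace ℝ (Fin 2)) : IsOpen (quad x) :=
  isOpen_lt continuous_const ((continuous_const.inner continuous_id).abs)

lemma circleUnif_apply (S : Set (EuclideanSpace ℝ (Fin 2))) (hS : MeasurableSet S) :
    circleUnif S = ENNReal.ofReal (2 * π)⁻¹ * volume (cpt ⁻¹' S ∩ Ico 0 (2 * π)) := by
  rw [circleUnif_eq, Measure.map_apply cpt_cont.measurable hS, Measure.smul_apply,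
    Measure.restrict_apply (cpt_cont.measurable hS), smul_eq_mul]

instance : IsProbabilityMeasure circleUnif := by
  constructor
  rw [circleUnif_apply univ MeasurableSet.univ]
  simp only [preimage_univ, univ_inter, Real.volume_Ico, sub_zero]
  rw [← ENNReal.ofReal_mul (by positivity), inv_mul_cancel₀ (by positivity), ENNReal.ofReal_one]

lemma inner_cpt_cpt (α θ : ℝ) : ⟪cpt α, cpt θ⟫ = Real.cos (θ - α) := by
  rw [inner_cpt, Real.cos_sub]
  simp [cpt]
  ring

lemma keyCircle {y z : EuclideanSpace ℝ (Fin 2)} (hy : ‖y‖ = 1) (hz : ‖z‖ = 1) :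
    circleUnif (quad y ∩ quad z) = ENNReal.ofReal (1/2 - Real.arccos |⟪y, z⟫| / π) := by
  have hpi := Real.pi_pos
  obtain ⟨α, rfl⟩ := exists_angle_s13 y hy
  obtain ⟨β, rfl⟩ := exists_angle_s13 z hz
  rw [circleUnif_apply _ (((quad_isOpen _).inter (quad_isOpen _)).measurableSet)]
  have hpre : cpt ⁻¹' (quad (cpt α) ∩ quad (cpt β)) ∩ Ico 0 (2*π)
      = {θ ∈ Ico 0 (2*π) | cc < |Real.cos (θ - α)| ∧ cc < |Real.cos (θ - β)|} := by
    ext θ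
    simp only [mem_inter_iff, mem_preimage, quad, mem_setOf_eq, inner_cpt_cpt, gt_iff_lt,
      mem_Ico, cc]
    tauto
  rw [hpre, key1D α β, ← ENNReal.ofReal_mul (by positivity)]
  congr 1
  rw [inner_cpt_cpt, show β - α = -(α - β) by ring, Real.cos_neg]
  field_simp

abbrev EE := EuclideanSpace ℝ (Fin 2)

lemma quad_meas (x : EE) : MeasurableSet (quad x) := (quad_isOpen x).measurableSet

theorem stmt_13 (μ : Measure (EuclideanSpace ℝ (Fin 2))) (hμ : IsProbabilityMeasure μ)
    (hsupp : μ (Metric.sphere (0 : EuclideanSpace ℝ (Fin 2)) 1)ᶜ = 0) :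
    ∫ x, ((μ (quad x)).toReal - 1 / 2) ^ 2 ∂circleUnif =
      1 / 4 - (1 / Real.pi) * ∫ y, ∫ z, Real.arccos |⟪y, z⟫| ∂μ ∂μ := by
  haveI := hμ
  have hpi := Real.pi_pos
  set ν := circleUnif with hν
  -- a.e. on sphere
  have hae : ∀ᵐ w ∂μ, ‖w‖ = 1 := by
    rw [ae_iff]
    convert hsupp using 2
    ext w
    simp [mem_sphere_zero_iff_norm]
  -- the symmetric measurable set
  set S : Set (EE × EE) := {p : EE × EE | Real.sqrt 2 / 2 < |⟪p.1, p.2⟫|} with hS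
  have hSmeas : MeasurableSet S :=
    (isOpen_lt continuous_const ((continuous_fst.inner continuous_snd).abs)).measurableSet
  set G : EE × EE → ℝ≥0∞ := S.indicator 1 with hG
  have hGmeas : Measurable G := measurable_one.indicator hSmeas
  have hImeas : Measurable fun x => μ (quad x) := by
    have h := measurable_measure_prodMk_left (ν := μ) hSmeas
    convert h using 2 with x
    rfl
  have hGquad : ∀ x y : EE, G (x, y) = (quad x).indicator 1 y := by
    intro x y
    simp only [hG]
    by_cases h : y ∈ quad x
    · rw [indicator_of_mem (show (x, y) ∈ S from h), indicator_of_mem h]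
      rfl
    · rw [indicator_of_notMem (show (x, y) ∉ S from h), indicator_of_notMem h]
  have hGsymm : ∀ x y : EE, G (x, y) = G (y, x) := by
    intro x y
    have hiff : (x, y) ∈ S ↔ (y, x) ∈ S := by
      simp only [hS, mem_setOf_eq]
      rw [real_inner_comm]
    simp only [hG]
    by_cases h : (x, y) ∈ S
    · rw [indicator_of_mem h, indicator_of_mem (hiff.1 h)]
      rfl
    · rw [indicator_of_notMem h, indicator_of_notMem (fun hh => h (hiff.2 hh))]
  have hGquad' : ∀ x y : EE, G (x, y) = (quad y).indicator 1 x := by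
    intro x y; rw [hGsymm, hGquad]
  have hA : ∀ x : EE, μ (quad x) = ∫⁻ y, G (x, y) ∂μ := by
    intro x
    rw [lintegral_congr fun y => hGquad x y, lintegral_indicator_one (quad_meas x)]
  -- computation 1
  have comp1 : ∫⁻ x, μ (quad x) ∂ν = ENNReal.ofReal (1/2) := by
    calc ∫⁻ x, μ (quad x) ∂ν = ∫⁻ x, ∫⁻ w, G (x, w) ∂μ ∂ν := lintegral_congr fun x => hA x
      _ = ∫⁻ w, ∫⁻ x, G (x, w) ∂ν ∂μ :=
          lintegral_lintegral_swap (f := fun x w => G (x, w)) hGmeas.aemeasurable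
      _ = ∫⁻ w, ν (quad w) ∂μ := by
          refine lintegral_congr fun w => ?_
          rw [lintegral_congr fun x => hGquad' x w, lintegral_indicator_one (quad_meas w)]
      _ = ∫⁻ _, ENNReal.ofReal (1/2) ∂μ := by
          refine lintegral_congr_ae ?_
          filter_upwards [hae] with w hw
          rw [show ν (quad w) = ν (quad w ∩ quad w) by rw [inter_self], keyCircle hw hw,
            real_inner_self_eq_norm_mul_norm, hw, one_mul, abs_one, Real.arccos_one, zero_div,
            sub_zero]
      _ = ENNReal.ofReal (1/2) := by simp
  -- computation 2
  have comp2 : ∫⁻ x, μ (quad x) * μ (quad x) ∂ν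
      = ∫⁻ p, ENNReal.ofReal (1/2 - Real.arccos |⟪p.1, p.2⟫| / π) ∂(μ.prod μ) := by
    have stepa : ∀ x : EE, μ (quad x) * μ (quad x)
        = ∫⁻ p, G (x, p.1) * G (x, p.2) ∂(μ.prod μ) := by
      intro x
      have hfm : Measurable fun y : EE => G (x, y) := hGmeas.comp measurable_prodMk_left
      rw [lintegral_prod_mul hfm.aemeasurable hfm.aemeasurable, ← hA]
    have humeas : Measurable (Function.uncurry fun (x : EE) (p : EE × EE) =>
        G (x, p.1) * G (x, p.2)) := by
      apply Measurable.mul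
      · exact hGmeas.comp (measurable_fst.prodMk (measurable_fst.comp measurable_snd))
      · exact hGmeas.comp (measurable_fst.prodMk (measurable_snd.comp measurable_snd))
    calc ∫⁻ x, μ (quad x) * μ (quad x) ∂ν
        = ∫⁻ x, ∫⁻ p, G (x, p.1) * G (x, p.2) ∂(μ.prod μ) ∂ν := lintegral_congr stepa
      _ = ∫⁻ p, ∫⁻ x, G (x, p.1) * G (x, p.2) ∂ν ∂(μ.prod μ) :=
          lintegral_lintegral_swap humeas.aemeasurable
      _ = ∫⁻ p, ν (quad p.1 ∩ quad p.2) ∂(μ.prod μ) := by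
          refine lintegral_congr fun p => ?_
          have hpt : ∀ x : EE, G (x, p.1) * G (x, p.2)
              = ((quad p.1) ∩ (quad p.2)).indicator 1 x := by
            intro x
            rw [hGquad' x p.1, hGquad' x p.2]
            by_cases h1 : x ∈ quad p.1 <;> by_cases h2 : x ∈ quad p.2 <;>
              simp [Set.indicator_apply, h1, h2]
          rw [lintegral_congr hpt,
            lintegral_indicator_one ((quad_meas p.1).inter (quad_meas p.2))]
      _ = ∫⁻ p, ENNReal.ofReal (1/2 - Real.arccos |⟪p.1, p.2⟫| / π) ∂(μ.prod μ) := by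
          refine lintegral_congr_ae ?_
          have h1 : ∀ᵐ p : EE × EE ∂(μ.prod μ), ‖p.1‖ = 1 := by
            rw [ae_iff]
            have he : {p : EE × EE | ¬ ‖p.1‖ = 1} = {x : EE | ¬ ‖x‖ = 1} ×ˢ (univ : Set EE) := by
              ext p; simp [Set.mem_prod]
            rw [he, Measure.prod_prod, ae_iff.1 hae, zero_mul]
          have h2 : ∀ᵐ p : EE × EE ∂(μ.prod μ), ‖p.2‖ = 1 := by
            rw [ae_iff]
            have he : {p : EE × EE | ¬ ‖p.2‖ = 1} = (univ : Set EE) ×ˢ {x : EE | ¬ ‖x‖ = 1} := by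
              ext p; simp [Set.mem_prod]
            rw [he, Measure.prod_prod, ae_iff.1 hae, mul_zero]
          filter_upwards [h1, h2] with p hp1 hp2
          rw [keyCircle hp1 hp2]
  -- integrability facts
  have htoReal_le : ∀ x : EE, (μ (quad x)).toReal ≤ 1 := by
    intro x
    simpa using ENNReal.toReal_mono ENNReal.one_ne_top (prob_le_one (μ := μ) (s := quad x))
  have int_p : Integrable (fun x => (μ (quad x)).toReal) ν := by
    refine Integrable.mono' (integrable_const 1) hImeas.ennreal_toReal.aestronglyMeasurable
      (ae_of_all _ fun x => ?_)
    rw [Real.norm_eq_abs, abs_of_nonneg ENNReal.toReal_nonneg]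
    exact htoReal_le x
  have int_p2 : Integrable (fun x => (μ (quad x)).toReal ^ 2) ν := by
    refine Integrable.mono' (integrable_const 1)
      (hImeas.ennreal_toReal.pow_const 2).aestronglyMeasurable (ae_of_all _ fun x => ?_)
    rw [Real.norm_eq_abs, abs_of_nonneg (by positivity)]
    nlinarith [htoReal_le x, ENNReal.toReal_nonneg (a := μ (quad x))]
  -- value of ∫ p dν
  have lhs1 : ∫ x, (μ (quad x)).toReal ∂ν = 1/2 := by
    rw [integral_toReal hImeas.aemeasurable
      (ae_of_all _ fun x => lt_of_le_of_lt (prob_le_one) ENNReal.one_lt_top), comp1,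
      ENNReal.toReal_ofReal (by norm_num)]
  -- value of ∫ p² dν
  have harccont : Continuous fun p : EE × EE => Real.arccos |⟪p.1, p.2⟫| :=
    Real.continuous_arccos.comp ((continuous_fst.inner continuous_snd).abs)
  have int_arc : Integrable (fun p : EE × EE => Real.arccos |⟪p.1, p.2⟫|) (μ.prod μ) := by
    refine Integrable.mono' (integrable_const π) harccont.aestronglyMeasurable
      (ae_of_all _ fun p => ?_)
    rw [Real.norm_eq_abs, abs_of_nonneg (Real.arccos_nonneg _)]
    exact Real.arccos_le_pi _
  have lhs2 : ∫ x, (μ (quad x)).toReal ^ 2 ∂ν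
      = ∫ p, (1/2 - Real.arccos |⟪p.1, p.2⟫| / π) ∂(μ.prod μ) := by
    have e1 : ∀ x : EE, (μ (quad x)).toReal ^ 2 = (μ (quad x) * μ (quad x)).toReal := by
      intro x; rw [ENNReal.toReal_mul]; ring
    simp only [e1]
    rw [integral_toReal (f := fun x => μ (quad x) * μ (quad x)) ((hImeas.mul hImeas).aemeasurable)
      (ae_of_all _ fun x => lt_of_le_of_lt (mul_le_one' prob_le_one prob_le_one)
        ENNReal.one_lt_top), comp2]
    refine (integral_eq_lintegral_of_nonneg_ae (ae_of_all _ fun p => ?_) ?_).symm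
    · show (0:ℝ) ≤ 1/2 - Real.arccos |⟪p.1, p.2⟫| / π
      have h := (div_le_iff₀ hpi).2
        (by linarith [Real.arccos_le_pi_div_two.2 (abs_nonneg ⟪p.1, p.2⟫)] :
          Real.arccos |⟪p.1, p.2⟫| ≤ 1/2 * π)
      linarith
    · exact (continuous_const.sub (harccont.div_const π)).aestronglyMeasurable
  -- rhs transformation
  have rhs1 : ∫ p, (1/2 - Real.arccos |⟪p.1, p.2⟫| / π) ∂(μ.prod μ)
      = 1/2 - (1/π) * ∫ y, ∫ z, Real.arccos |⟪y, z⟫| ∂μ ∂μ := by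
    rw [integral_sub (integrable_const _) (int_arc.div_const π), integral_const,
      integral_div, integral_prod _ int_arc]
    simp [measure_univ]
    ring
  -- final assembly
  have hsplit : ∫ x, ((μ (quad x)).toReal - 1/2)^2 ∂ν
      = ∫ x, ((μ (quad x)).toReal^2 - (μ (quad x)).toReal + 1/4) ∂ν :=
    integral_congr_ae (ae_of_all _ fun x => by ring)
  have int_sub : Integrable
      (fun x => (μ (quad x)).toReal ^ 2 - (μ (quad x)).toReal) ν := int_p2.sub int_p
  rw [hsplit, integral_add int_sub (integrable_const _),
    integral_sub int_p2 int_p, integral_const, lhs1, lhs2, rhs1]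
  simp only [measure_univ, probReal_univ, ENNReal.toReal_one, smul_eq_mul, one_mul]
  ring
end
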